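/- Let f : X → Y be a compact-preserving function from a sequentially Hausdorff strong Fréchet space X to a Hausdorff space Y. Then the restriction of f to the set LI_f of points at which f is locally infinite is continuous. -/

import Mathlib

open Filter Topology Set

def CompactPreserving {X Y : Type*} [TopologicalSpace X] [TopologicalSpace Y]
    (f : X → Y) : Prop := ∀ K : Set X, IsCompact K → IsCompact (f '' K)

def LIset {X Y : Type*} [TopologicalSpace X] (f : X → Y) : Set X :=
  {x | ∀ U ∈ 𝓝 x, (f '' U).Infinite}

def SeqHausdorff (X : Type*) [TopologicalSpace X] : Prop :=
  ∀ (u : ℕ → X) (a b : X), Filter.Tendsto u Filter.atTop (𝓝 a) →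
    Filter.Tendsto u Filter.atTop (𝓝 b) → a = b

def StrongFrechet (X : Type*) [TopologicalSpace X] : Prop :=
  ∀ (A : ℕ → Set X), (∀ n, A (n + 1) ⊆ A n) → ∀ a : X, (∀ n, a ∈ closure (A n)) →
    ∃ u : ℕ → X, (∀ n, u n ∈ A n) ∧ Filter.Tendsto u Filter.atTop (𝓝 a)

section Aux

variable {X Y : Type*} [TopologicalSpace X] [TopologicalSpace Y]

/-- Strong Fréchet applied to a constant family. -/
lemma sf_const (hX2 : StrongFrechet X) {A : Set X} {a : X} (ha : a ∈ closure A) :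
    ∃ u : ℕ → X, (∀ n, u n ∈ A) ∧ Tendsto u atTop (𝓝 a) :=
  hX2 (fun _ => A) (fun _ => subset_rfl) a (fun _ => ha)

/-- A point of local infiniteness is in the closure of the set of points whose value
avoids any fixed finite set. -/
lemma li_closure {f : X → Y} {p : X} (hp : p ∈ LIset f) {F : Set Y} (hF : F.Finite) :
    p ∈ closure {z | f z ∉ F} := by
  rw [mem_closure_iff]
  intro O hO hpO
  have h1 : (f '' O).Infinite := hp O (hO.mem_nhds hpO)
  obtain ⟨y, hy, hyF⟩ : ∃ y ∈ f '' O, y ∉ F := by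
    by_contra hcon
    push_neg at hcon
    exact h1 (hF.subset hcon)
  obtain ⟨z, hz, rfl⟩ := hy
  exact ⟨z, hz, hyF⟩

lemma exists_infinite_fiber {g : ℕ → Y} (h : (Set.range g).Finite) :
    ∃ d, {m | g m = d}.Infinite := by
  by_contra hcon
  push_neg at hcon
  have huniv : (Set.univ : Set ℕ) = ⋃ d ∈ Set.range g, {m | g m = d} := by
    ext m
    simp only [Set.mem_univ, Set.mem_iUnion, Set.mem_setOf_eq, true_iff]
    exact ⟨g m, ⟨m, rfl⟩, rfl⟩
  have : (Set.univ : Set ℕ).Finite := by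
    rw [huniv]
    exact h.biUnion (fun d _ => hcon d)
  exact Set.infinite_univ this

/-- From a sequence with finite range, extract a constant subsequence. -/
lemma exists_const_subseq {g : ℕ → Y} (h : ¬ (Set.range g).Infinite) :
    ∃ d, ∃ φ : ℕ → ℕ, StrictMono φ ∧ ∀ n, g (φ n) = d := by
  rw [Set.not_infinite] at h
  obtain ⟨d, hd⟩ := exists_infinite_fiber h
  obtain ⟨φ, hφ, hmem⟩ :=
    Filter.extraction_of_frequently_atTop (Nat.frequently_atTop_iff_infinite.mpr hd)
  exact ⟨d, φ, hφ, hmem⟩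

/-- From a sequence with infinite range, extract an injective subsequence. -/
lemma exists_inj_subseq {g : ℕ → Y} (h : (Set.range g).Infinite) :
    ∃ φ : ℕ → ℕ, StrictMono φ ∧ Function.Injective (g ∘ φ) := by
  have key : ∀ N : ℕ, ∃ m, N < m ∧ ∀ k ≤ N, g m ≠ g k := by
    intro N
    have hfin : (g '' {k | k ≤ N}).Finite := (Set.finite_le_nat N).image g
    obtain ⟨y, hy, hyn⟩ : ∃ y ∈ Set.range g, y ∉ g '' {k | k ≤ N} := by
      by_contra hcon
      push_neg at hcon
      exact h (hfin.subset hcon)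
    obtain ⟨m, rfl⟩ := hy
    refine ⟨m, ?_, ?_⟩
    · by_contra hm
      push_neg at hm
      exact hyn ⟨m, hm, rfl⟩
    · intro k hk hek
      exact hyn ⟨k, hk, hek.symm⟩
  choose next hlt hne using key
  let φ : ℕ → ℕ := fun n => Nat.rec (next 0) (fun _ ih => next ih) n
  have hmono : StrictMono φ := strictMono_nat_of_lt_succ (fun n => hlt (φ n))
  have hneq : ∀ i j, i < j → g (φ j) ≠ g (φ i) := by
    intro i j hij
    cases j with
    | zero => omega
    | succ j' =>
      have hij' : i ≤ j' := by omega
      exact hne (φ j') (φ i) (hmono.monotone hij')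
  refine ⟨φ, hmono, fun i j hgij => ?_⟩
  rcases lt_trichotomy i j with hlt' | heq | hgt
  · exact absurd hgij.symm (hneq i j hlt')
  · exact heq
  · exact absurd hgij (hneq j i hgt)

/-- Key lemma: for a compact-preserving map into a Hausdorff space, if a convergent
sequence has injective image sequence, then the image sequence converges to the image
of the limit. -/
lemma tendsto_of_injective [T2Space Y] {f : X → Y} (hf : CompactPreserving f)
    {v : ℕ → X} {p : X} (hv : Tendsto v atTop (𝓝 p)) (hinj : Function.Injective (f ∘ v)) :
    Tendsto (f ∘ v) atTop (𝓝 (f p)) := by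
  by_contra hcon
  rw [not_tendsto_iff_exists_frequently_notMem] at hcon
  obtain ⟨W0, hW0, hfreq0⟩ := hcon
  obtain ⟨φ, hφ, hφspec⟩ := Filter.extraction_of_frequently_atTop hfreq0
  set w := v ∘ φ with hwdef
  have hw : Tendsto w atTop (𝓝 p) := hv.comp hφ.tendsto_atTop
  have hwinj : Function.Injective (f ∘ w) := by
    intro i j hij
    exact hφ.injective (hinj (hij : (f ∘ v) (φ i) = (f ∘ v) (φ j)))
  have hwW : ∀ m, f (w m) ∉ W0 := fun m => hφspec m
  have hK : IsCompact (insert p (Set.range w)) := hw.isCompact_insert_range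
  have hfK : IsCompact (f '' insert p (Set.range w)) := hf _ hK
  have hle : map (f ∘ w) atTop ≤ 𝓟 (f '' insert p (Set.range w)) := by
    rw [le_principal_iff, mem_map]
    filter_upwards with m
    exact ⟨w m, Set.mem_insert_of_mem _ ⟨m, rfl⟩, rfl⟩
  obtain ⟨y, hyK, hy⟩ := hfK.exists_clusterPt hle
  have hyfreq : ∀ U ∈ 𝓝 y, ∃ᶠ m in atTop, f (w m) ∈ U := by
    intro U hU
    have hy' : MapClusterPt y atTop (f ∘ w) := hy
    exact (mapClusterPt_iff_frequently).mp hy' U hU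
  have hyne : y ≠ f p := by
    intro h
    obtain ⟨m, hm⟩ := (hyfreq W0 (h ▸ hW0)).exists
    exact hwW m hm
  obtain ⟨q, hq, hqy⟩ := hyK
  rcases hq with rfl | ⟨M, rfl⟩
  · exact hyne hqy.symm
  -- y = f (w M); delete index M
  subst hqy
  set ψ : ℕ → ℕ := fun m => if m < M then m else m + 1 with hψdef
  have hψ : StrictMono ψ := by
    intro i j hij
    simp only [hψdef]
    split_ifs <;> omega
  have hψne : ∀ m, ψ m ≠ M := by
    intro m
    simp only [hψdef]
    split_ifs <;> omega
  set w' := w ∘ ψ with hw'def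
  have hw' : Tendsto w' atTop (𝓝 p) := hw.comp hψ.tendsto_atTop
  have hK' : IsCompact (insert p (Set.range w')) := hw'.isCompact_insert_range
  have hfK' : IsCompact (f '' insert p (Set.range w')) := hf _ hK'
  have hycl : f (w M) ∈ f '' insert p (Set.range w') := by
    have hsub : Set.range (f ∘ w') ⊆ f '' insert p (Set.range w') := by
      rintro _ ⟨m, rfl⟩
      exact ⟨w' m, Set.mem_insert_of_mem _ ⟨m, rfl⟩, rfl⟩
    have hclsub : closure (Set.range (f ∘ w')) ⊆ f '' insert p (Set.range w') :=
      closure_minimal hsub hfK'.isClosed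
    apply hclsub
    rw [mem_closure_iff_nhds]
    intro U hU
    obtain ⟨m, hmge, hmU⟩ := Filter.frequently_atTop.mp (hyfreq U hU) (M + 1)
    have hm1 : ψ (m - 1) = m := by
      simp only [hψdef]
      split_ifs <;> omega
    exact ⟨f (w m), hmU, m - 1, by rw [Function.comp_apply, hw'def, Function.comp_apply, hm1]⟩
  obtain ⟨q', hq', hq'y⟩ := hycl
  rcases hq' with rfl | ⟨m, rfl⟩
  · exact hyne hq'y.symm
  · have : ψ m = M := hwinj (hq'y : (f ∘ w) (ψ m) = (f ∘ w) M)
    exact hψne m this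

/-- Diagonalization via strong Fréchet. -/
lemma sf_diagonal (hX2 : StrongFrechet X) {x : ℕ → X} {a : X} (hx : Tendsto x atTop (𝓝 a))
    (S : ℕ → Set X) (hS : ∀ n, x n ∈ closure (S n)) :
    ∃ u : ℕ → X, Tendsto u atTop (𝓝 a) ∧ ∀ r, ∃ n, r ≤ n ∧ u r ∈ S n := by
  set A : ℕ → Set X := fun r => ⋃ n, ⋃ (_ : r ≤ n), S n with hA
  have hdec : ∀ r, A (r + 1) ⊆ A r := by
    intro r z hz
    simp only [hA, Set.mem_iUnion] at hz ⊢
    obtain ⟨n, hn, hzn⟩ := hz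
    exact ⟨n, by omega, hzn⟩
  have hcl : ∀ r, a ∈ closure (A r) := by
    intro r
    refine isClosed_closure.mem_of_tendsto hx ?_
    filter_upwards [Filter.eventually_ge_atTop r] with n hn
    refine closure_mono (fun z hz => ?_) (hS n)
    simp only [hA, Set.mem_iUnion]
    exact ⟨n, hn, hz⟩
  obtain ⟨u, hmem, hut⟩ := hX2 A hdec a hcl
  refine ⟨u, hut, fun r => ?_⟩
  have := hmem r
  simp only [hA, Set.mem_iUnion] at this
  obtain ⟨n, hn, h⟩ := this
  exact ⟨n, hn, h⟩

/-- If for every finite set `F` there is a sequence converging to `p` with constant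
value in `S \ F`, then there is a sequence converging to `p` with infinite image
contained in `S`. -/
lemma infinite_range_of_consts {f : X → Y} (hX2 : StrongFrechet X) {p : X} {S : Set Y}
    (h : ∀ F : Finset Y, ∃ d, d ∈ S ∧ d ∉ F ∧
      ∃ t : ℕ → X, Tendsto t atTop (𝓝 p) ∧ ∀ m, f (t m) = d) :
    ∃ u : ℕ → X, Tendsto u atTop (𝓝 p) ∧ (Set.range (f ∘ u)).Infinite ∧
      ∀ m, f (u m) ∈ S := by
  classical
  choose d hdS hdF t ht hc using h
  let G : ℕ → Finset Y := fun n => Nat.rec ∅ (fun _ Gn => insert (d Gn) Gn) n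
  have hGsucc : ∀ n, G (n + 1) = insert (d (G n)) (G n) := fun _ => rfl
  have hGmono : ∀ m n, m ≤ n → G m ⊆ G n := by
    intro m n hmn
    induction n with
    | zero => have : m = 0 := by omega
              subst this; exact subset_rfl
    | succ k ih =>
      rcases Nat.lt_or_ge m (k + 1) with hm | hm
      · exact (ih (by omega)).trans (by rw [hGsucc]; exact Finset.subset_insert _ _)
      · have : m = k + 1 := by omega
        subst this; exact subset_rfl
  have hdinj : Function.Injective (fun n => d (G n)) := by
    intro i j hij
    by_contra hne
    rcases lt_or_gt_of_ne hne with hlt | hlt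
    · have h1 : d (G i) ∈ G j := hGmono (i + 1) j hlt (by rw [hGsucc]; exact Finset.mem_insert_self _ _)
      have hij' : d (G i) = d (G j) := hij
      rw [hij'] at h1
      exact hdF (G j) h1
    · have h1 : d (G j) ∈ G i := hGmono (j + 1) i hlt (by rw [hGsucc]; exact Finset.mem_insert_self _ _)
      have hij' : d (G i) = d (G j) := hij
      rw [← hij'] at h1
      exact hdF (G i) h1
  -- diagonalize over the constant sequences t (G n)
  have hcln : ∀ n, p ∈ closure (Set.range (t (G n)) ∩ f ⁻¹' {d (G n)}) := by
    intro n
    refine mem_closure_of_tendsto (ht (G n)) ?_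
    filter_upwards with m
    exact ⟨⟨m, rfl⟩, hc (G n) m⟩
  set A : ℕ → Set X := fun r => ⋃ n, ⋃ (_ : r ≤ n), (Set.range (t (G n)) ∩ f ⁻¹' {d (G n)}) with hA
  have hdec : ∀ r, A (r + 1) ⊆ A r := by
    intro r z hz
    simp only [hA, Set.mem_iUnion] at hz ⊢
    obtain ⟨n, hn, hzn⟩ := hz
    exact ⟨n, by omega, hzn⟩
  have hclA : ∀ r, p ∈ closure (A r) := by
    intro r
    refine (closure_mono (fun z hz => ?_)) (hcln r)
    simp only [hA, Set.mem_iUnion]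
    exact ⟨r, le_refl r, hz⟩
  obtain ⟨u, hmem, hut⟩ := hX2 A hdec p hclA
  have hval : ∀ r, ∃ n, r ≤ n ∧ f (u r) = d (G n) := by
    intro r
    have := hmem r
    simp only [hA, Set.mem_iUnion] at this
    obtain ⟨n, hn, _, hpre⟩ := this
    exact ⟨n, hn, hpre⟩
  refine ⟨u, hut, ?_, ?_⟩
  · intro hfin
    choose nr hnr hvr using hval
    have hpre : {n | d (G n) ∈ Set.range (f ∘ u)}.Finite := by
      have : {n | d (G n) ∈ Set.range (f ∘ u)} = (fun n => d (G n)) ⁻¹' (Set.range (f ∘ u)) := rfl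
      rw [this]
      exact Set.Finite.preimage hdinj.injOn hfin
    obtain ⟨B, hB⟩ := hpre.bddAbove
    have hmemB : nr (B + 1) ∈ {n | d (G n) ∈ Set.range (f ∘ u)} := by
      exact ⟨B + 1, hvr (B + 1)⟩
    have := hB hmemB
    have := hnr (B + 1)
    omega
  · intro m
    obtain ⟨n, _, hvn⟩ := hval m
    rw [hvn]
    exact hdS (G n)

/-- Every point of local infiniteness admits a sequence converging to it whose image
sequence is injective. -/
lemma exists_injective_tendsto {f : X → Y} (hX2 : StrongFrechet X) {p : X}
    (hp : p ∈ LIset f) :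
    ∃ v : ℕ → X, Tendsto v atTop (𝓝 p) ∧ Function.Injective (f ∘ v) := by
  by_contra hcon
  push_neg at hcon
  have hfin : ∀ v : ℕ → X, Tendsto v atTop (𝓝 p) → ¬ (Set.range (f ∘ v)).Infinite := by
    intro v hv hinf
    obtain ⟨φ, hφ, hinj⟩ := exists_inj_subseq hinf
    exact hcon (v ∘ φ) (hv.comp hφ.tendsto_atTop) hinj
  have hc : ∀ F : Finset Y, ∃ dd, dd ∈ (Set.univ : Set Y) ∧ dd ∉ F ∧
      ∃ t : ℕ → X, Tendsto t atTop (𝓝 p) ∧ ∀ m, f (t m) = dd := by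
    intro F
    obtain ⟨s, hsmem, hst⟩ := sf_const hX2 (li_closure hp F.finite_toSet)
    obtain ⟨dd, φ, hφ, hconst⟩ := exists_const_subseq (hfin s hst)
    refine ⟨dd, trivial, ?_, s ∘ φ, hst.comp hφ.tendsto_atTop, fun m => hconst m⟩
    have := hsmem (φ 0)
    rw [← hconst 0]
    exact this
  obtain ⟨u, hu, hinf, _⟩ := infinite_range_of_consts hX2 hc
  exact hfin u hu hinf

end Aux

theorem stmt10 {X Y : Type*} [TopologicalSpace X] [TopologicalSpace Y] [T2Space Y]
    (hX1 : SeqHausdorff X) (hX2 : StrongFrechet X)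
    (f : X → Y) (hf : CompactPreserving f) :
    Continuous (Set.restrict (LIset f) f) := by
  rw [continuous_iff_continuousAt]
  rintro ⟨a, ha⟩
  rw [ContinuousAt]
  by_contra hcon
  rw [not_tendsto_iff_exists_frequently_notMem] at hcon
  obtain ⟨s, hs, hfreq⟩ := hcon
  obtain ⟨V, hVs, hVo, hfaV⟩ := mem_nhds_iff.mp hs
  have hclos : (⟨a, ha⟩ : LIset f) ∈ closure {z : LIset f | f ↑z ∉ V} := by
    rw [mem_closure_iff_frequently]
    exact hfreq.mono (fun z hz hzV => hz (hVs hzV))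
  rw [closure_subtype] at hclos
  obtain ⟨x, hxmem, hxt⟩ := sf_const hX2 hclos
  have hx : ∀ n, x n ∈ LIset f ∧ f (x n) ∉ V := by
    intro n
    obtain ⟨z, hz, hzx⟩ := hxmem n
    rw [← hzx]
    exact ⟨z.2, hz⟩
  by_cases hinf : (Set.range (f ∘ x)).Infinite
  · obtain ⟨φ, hφ, hinj⟩ := exists_inj_subseq hinf
    have ht : Tendsto (f ∘ (x ∘ φ)) atTop (𝓝 (f a)) :=
      tendsto_of_injective hf (hxt.comp hφ.tendsto_atTop) hinj
    obtain ⟨m, hm⟩ := (ht.eventually (hVo.eventually_mem hfaV)).exists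
    exact (hx (φ m)).2 hm
  · obtain ⟨c, φ, hφ, hc⟩ := exists_const_subseq hinf
    set x' := x ∘ φ with hx'def
    have hx't : Tendsto x' atTop (𝓝 a) := hxt.comp hφ.tendsto_atTop
    have hx'LI : ∀ n, x' n ∈ LIset f := fun n => (hx (φ n)).1
    have hcV : c ∉ V := by
      rw [← hc 0]
      exact (hx (φ 0)).2
    have hcne : f a ≠ c := fun h => hcV (h ▸ hfaV)
    obtain ⟨V1, W, hV1o, hWo, hfaV1, hcW, hdisj⟩ := t2_separation hcne
    -- injective-image sequences at each x' n, with image tending to c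
    have hv : ∀ n, ∃ v : ℕ → X, Tendsto v atTop (𝓝 (x' n)) ∧
        Function.Injective (f ∘ v) ∧ Tendsto (f ∘ v) atTop (𝓝 c) := by
      intro n
      obtain ⟨v, hvt, hvinj⟩ := exists_injective_tendsto hX2 (hx'LI n)
      have hvc := tendsto_of_injective hf hvt hvinj
      rw [show f (x' n) = c from hc n] at hvc
      exact ⟨v, hvt, hvinj, hvc⟩
    choose v hvt hvinj hvc using hv
    have hconsts : ∀ F : Finset Y, ∃ dd, dd ∈ W ∧ dd ∉ F ∧
        ∃ t : ℕ → X, Tendsto t atTop (𝓝 a) ∧ ∀ m, f (t m) = dd := by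
      intro F
      set S : ℕ → Set X := fun n => {z | z ∈ Set.range (v n) ∧ f z ∈ W ∧ f z ∉ F} with hS
      have hclS : ∀ n, x' n ∈ closure (S n) := by
        intro n
        refine mem_closure_of_tendsto (hvt n) ?_
        have h1 : ∀ᶠ m in atTop, f (v n m) ∈ W := (hvc n).eventually (hWo.eventually_mem hcW)
        have h2 : ∀ᶠ m in atTop, f (v n m) ∉ (F : Set Y) := by
          have hfinpre : {m | (f ∘ v n) m ∈ (F : Set Y)}.Finite :=
            Set.Finite.preimage (hvinj n).injOn F.finite_toSet
          rw [← Nat.cofinite_eq_atTop]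
          exact hfinpre.eventually_cofinite_notMem
        filter_upwards [h1, h2] with m hm1 hm2
        exact ⟨⟨m, rfl⟩, hm1, hm2⟩
      obtain ⟨u, hut, hudiag⟩ := sf_diagonal hX2 hx't S hclS
      have huW : ∀ r, f (u r) ∈ W ∧ f (u r) ∉ (F : Set Y) := by
        intro r
        obtain ⟨n, _, _, hmem2, hmem3⟩ := hudiag r
        exact ⟨hmem2, hmem3⟩
      by_cases hri : (Set.range (f ∘ u)).Infinite
      · exfalso
        obtain ⟨φ2, hφ2, hinj2⟩ := exists_inj_subseq hri
        have ht2 : Tendsto (f ∘ (u ∘ φ2)) atTop (𝓝 (f a)) :=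
          tendsto_of_injective hf (hut.comp hφ2.tendsto_atTop) hinj2
        obtain ⟨m, hm⟩ := (ht2.eventually (hV1o.eventually_mem hfaV1)).exists
        exact Set.disjoint_left.mp hdisj hm (huW (φ2 m)).1
      · obtain ⟨dd, φ2, hφ2, hd2⟩ := exists_const_subseq hri
        refine ⟨dd, ?_, ?_, u ∘ φ2, hut.comp hφ2.tendsto_atTop, fun m => hd2 m⟩
        · rw [← hd2 0]; exact (huW (φ2 0)).1
        · rw [← hd2 0]; exact (huW (φ2 0)).2
    obtain ⟨u, hut, hinfu, huW⟩ := infinite_range_of_consts hX2 hconsts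
    obtain ⟨φ3, hφ3, hinj3⟩ := exists_inj_subseq hinfu
    have ht3 : Tendsto (f ∘ (u ∘ φ3)) atTop (𝓝 (f a)) :=
      tendsto_of_injective hf (hut.comp hφ3.tendsto_atTop) hinj3
    obtain ⟨m, hm⟩ := (ht3.eventually (hV1o.eventually_mem hfaV1)).exists
    exact Set.disjoint_left.mp hdisj hm (huW (φ3 m))
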